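/- arXiv:2401.13508 — 3 statements merged into one kernel-verified Lean document; each statement's English description precedes it below -/
import Mathlib

section
/- Let p be a prime number and set p* = p if p ≥ 3 and p* = 4 if p = 2. Let E be a complete nonarchimedean normed field equipped with a structure of normed ℚ_p-algebra (so the norm of E is multiplicative and restricts to the standard p-adic norm on ℚ_p). Then for every x ∈ E with ‖x‖ ≤ ‖p*‖, the p-adic logarithm series log(1+x) = Σ_{n≥1} (−1)^{n−1} xⁿ/n converges in E and satisfies ‖log(1+x)‖ = ‖x‖. -/
open Filter Topology

private lemma aux_lt3 (n : ℕ) : n + 2 < 3 ^ (n + 1) := by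
  induction n with
  | zero => norm_num
  | succ k ih =>
    have h1 : 1 ≤ 3 ^ (k + 1) := Nat.one_le_pow _ _ (by norm_num)
    have : 3 ^ (k + 2) = 3 * 3 ^ (k + 1) := by ring
    omega

private lemma aux_le2 (n : ℕ) : n + 2 ≤ 2 ^ (n + 1) := by
  have := Nat.lt_two_pow_self (n := n + 1)
  omega

private lemma norm_finset_sum_le {E : Type*} [NormedField E]
    (hna : IsNonarchimedean (fun y : E => ‖y‖)) {C : ℝ} (hC : 0 ≤ C)
    {g : ℕ → E} (hg : ∀ i, ‖g i‖ ≤ C) (s : Finset ℕ) : ‖∑ i ∈ s, g i‖ ≤ C := by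
  induction s using Finset.cons_induction with
  | empty => simpa using hC
  | cons a s ha ih =>
    rw [Finset.sum_cons]
    exact le_trans (hna _ _) (max_le (hg a) ih)

private lemma norm_tsum_le' {E : Type*} [NormedField E] [CompleteSpace E]
    (hna : IsNonarchimedean (fun y : E => ‖y‖)) {C : ℝ} (hC : 0 ≤ C)
    {g : ℕ → E} (hs : Summable g) (hg : ∀ i, ‖g i‖ ≤ C) : ‖∑' i, g i‖ ≤ C := by
  refine le_of_tendsto' hs.hasSum.tendsto_sum_nat.norm fun N => ?_
  exact norm_finset_sum_le hna hC hg _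

/-- Let `p` be a prime number and set `p* = p` if `p ≥ 3` and `p* = 4`
if `p = 2`.  Let `E` be a complete nonarchimedean normed field equipped with a structure
of normed `ℚ_p`-algebra (so the norm of `E` is multiplicative and restricts to the
standard `p`-adic norm on `ℚ_p`).  Then for every `x ∈ E` with `‖x‖ ≤ ‖p*‖`, the
`p`-adic logarithm series `log(1+x) = Σ_{n≥1} (−1)^{n−1} xⁿ/n` converges in `E` and
satisfies `‖log(1+x)‖ = ‖x‖`. -/
theorem padic_log_norm_eq (p : ℕ) [Fact p.Prime]
    (E : Type*) [NormedField E] [CompleteSpace E] [NormedAlgebra ℚ_[p] E]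
    (hna : IsNonarchimedean (fun y : E => ‖y‖))
    (pstar : ℕ) (hpstar : pstar = if 3 ≤ p then p else 4)
    (x : E) (hx : ‖x‖ ≤ ‖(pstar : E)‖) :
    Summable (fun n : ℕ => (-1 : E) ^ n * x ^ (n + 1) / ((n : E) + 1)) ∧
      ‖∑' n : ℕ, (-1 : E) ^ n * x ^ (n + 1) / ((n : E) + 1)‖ = ‖x‖ := by
  haveI : IsUltrametricDist E :=
    IsUltrametricDist.isUltrametricDist_of_isNonarchimedean_norm hna
  have hp := (Fact.out : p.Prime)
  have hp1 : 1 < p := hp.one_lt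
  have hp0R : (0 : ℝ) < p := by positivity
  set f : ℕ → E := fun n : ℕ => (-1 : E) ^ n * x ^ (n + 1) / ((n : E) + 1) with hf
  -- norm of natural numbers in E
  have hnormE : ∀ k : ℕ, ‖((k : ℕ) : E)‖ = ‖((k : ℕ) : ℚ_[p])‖ := by
    intro k
    rw [← map_natCast (algebraMap ℚ_[p] E) k, norm_algebraMap']
  have keyQ : ∀ m : ℕ, ‖((m + 1 : ℕ) : ℚ_[p])‖
      = (p : ℝ) ^ (-(padicValNat p (m + 1) : ℤ)) := by
    intro m
    rw [Padic.norm_eq_zpow_neg_valuation (by exact_mod_cast Nat.succ_ne_zero m),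
      Padic.valuation_natCast]
  -- the norm of each term
  have keyE : ∀ m : ℕ, ‖f m‖ = ‖x‖ ^ (m + 1) * (p : ℝ) ^ (padicValNat p (m + 1)) := by
    intro m
    have h1 : ((m : E) + 1) = (((m + 1 : ℕ) : ℕ) : E) := by push_cast; ring
    rw [hf]
    simp only
    rw [norm_div, norm_mul, norm_pow, norm_pow, norm_neg, norm_one, one_pow, one_mul,
      h1, hnormE, keyQ, zpow_neg, div_eq_mul_inv, inv_inv, zpow_natCast]
  -- p ^ v ≤ m + 1
  have hdvd : ∀ m : ℕ, (p : ℝ) ^ (padicValNat p (m + 1)) ≤ (m : ℝ) + 1 := by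
    intro m
    have := Nat.le_of_dvd (Nat.succ_pos m) (pow_padicValNat_dvd (p := p) (n := m + 1))
    exact_mod_cast this
  have hxnn : (0 : ℝ) ≤ ‖x‖ := norm_nonneg x
  -- the two case-dependent bounds
  have hmain : ‖x‖ ≤ 1 / 2 ∧ ∀ n : ℕ, ‖f (n + 1)‖ ≤ ‖x‖ / 2 := by
    by_cases hp3 : 3 ≤ p
    · have hpstar' : pstar = p := by rw [hpstar, if_pos hp3]
      have hxp : ‖x‖ ≤ ((p : ℝ))⁻¹ := by
        rw [hpstar', hnormE p] at hx
        rwa [Padic.norm_p] at hx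
      have hp3R : (3 : ℝ) ≤ p := by exact_mod_cast hp3
      constructor
      · calc ‖x‖ ≤ ((p : ℝ))⁻¹ := hxp
          _ ≤ 1 / 2 := by rw [one_div]; apply inv_anti₀ <;> linarith
      · intro n
        have hv : padicValNat p (n + 2) ≤ n := by
          by_contra hcon
          have h1 : n + 1 ≤ padicValNat p (n + 2) := by omega
          have h2 : p ^ (n + 1) ≤ p ^ padicValNat p (n + 2) :=
            Nat.pow_le_pow_right hp.pos h1
          have h3 : p ^ padicValNat p (n + 2) ≤ n + 2 :=
            Nat.le_of_dvd (by omega) (pow_padicValNat_dvd (p := p) (n := n + 2))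
          have h4 : 3 ^ (n + 1) ≤ p ^ (n + 1) := Nat.pow_le_pow_left hp3 _
          have := aux_lt3 n
          omega
        have hpow : (p : ℝ) ^ (padicValNat p (n + 2)) ≤ (p : ℝ) ^ n :=
          pow_le_pow_right₀ (by exact_mod_cast hp1.le) hv
        have hxpow : ‖x‖ ^ (n + 2) ≤ ‖x‖ * ((p : ℝ)⁻¹) ^ (n + 1) := by
          calc ‖x‖ ^ (n + 2) = ‖x‖ * ‖x‖ ^ (n + 1) := by ring
            _ ≤ ‖x‖ * ((p : ℝ)⁻¹) ^ (n + 1) :=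
                mul_le_mul_of_nonneg_left (pow_le_pow_left₀ hxnn hxp _) hxnn
        have hcancel : ((p : ℝ)⁻¹) ^ (n + 1) * (p : ℝ) ^ n = (p : ℝ)⁻¹ := by
          rw [pow_succ]
          field_simp
          rw [← mul_pow, one_div_mul_cancel hp0R.ne', one_pow]
        calc ‖f (n + 1)‖
            = ‖x‖ ^ (n + 2) * (p : ℝ) ^ (padicValNat p (n + 2)) := keyE (n + 1)
          _ ≤ (‖x‖ * ((p : ℝ)⁻¹) ^ (n + 1)) * (p : ℝ) ^ n :=
              mul_le_mul hxpow hpow (by positivity) (by positivity)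
          _ = ‖x‖ * (p : ℝ)⁻¹ := by rw [mul_assoc, hcancel]
          _ ≤ ‖x‖ / 2 := by
              rw [div_eq_mul_inv]
              apply mul_le_mul_of_nonneg_left _ hxnn
              apply inv_anti₀ (by norm_num)
              linarith
    · have hp2 : p = 2 := by
        have := hp.two_le
        omega
      subst hp2
      have hpstar' : pstar = 4 := by rw [hpstar, if_neg hp3]
      have hxp : ‖x‖ ≤ 1 / 4 := by
        rw [hpstar', hnormE 4] at hx
        have h4 : ((4 : ℕ) : ℚ_[2]) = (2 : ℚ_[2]) ^ 2 := by norm_num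
        rw [h4, norm_pow] at hx
        have h2 : ‖(2 : ℚ_[2])‖ = ((2 : ℝ))⁻¹ := by
          have := Padic.norm_p (p := 2)
          exact_mod_cast this
        rw [h2] at hx
        calc ‖x‖ ≤ ((2 : ℝ))⁻¹ ^ 2 := hx
          _ = 1 / 4 := by norm_num
      constructor
      · linarith
      · intro n
        have hv : padicValNat 2 (n + 2) ≤ n + 1 := by
          by_contra hcon
          have h1 : n + 2 ≤ padicValNat 2 (n + 2) := by omega
          have h2 : 2 ^ (n + 2) ≤ 2 ^ padicValNat 2 (n + 2) :=
            Nat.pow_le_pow_right (by norm_num) h1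
          have h3 : 2 ^ padicValNat 2 (n + 2) ≤ n + 2 :=
            Nat.le_of_dvd (by omega) (pow_padicValNat_dvd (p := 2) (n := n + 2))
          have h5 : (2 : ℕ) ^ (n + 2) = 4 * 2 ^ n := by ring
          have := aux_le2 (n + 1)
          omega
        have hpow : ((2 : ℕ) : ℝ) ^ (padicValNat 2 (n + 2)) ≤ (2 : ℝ) ^ (n + 1) := by
          have hc : ((2 : ℕ) : ℝ) = (2 : ℝ) := by norm_num
          rw [hc]
          exact pow_le_pow_right₀ (by norm_num) hv
        have hxpow : ‖x‖ ^ (n + 2) ≤ ‖x‖ * ((1 : ℝ) / 4) ^ (n + 1) := by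
          calc ‖x‖ ^ (n + 2) = ‖x‖ * ‖x‖ ^ (n + 1) := by ring
            _ ≤ ‖x‖ * ((1 : ℝ) / 4) ^ (n + 1) :=
                mul_le_mul_of_nonneg_left (pow_le_pow_left₀ hxnn hxp _) hxnn
        have hcancel : ((1 : ℝ) / 4) ^ (n + 1) * (2 : ℝ) ^ (n + 1) = ((1 : ℝ) / 2) ^ (n + 1) := by
          rw [← mul_pow]; norm_num
        have hhalf : ((1 : ℝ) / 2) ^ (n + 1) ≤ 1 / 2 := by
          have := pow_le_pow_of_le_one (by norm_num : (0:ℝ) ≤ 1/2)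
            (by norm_num : (1:ℝ)/2 ≤ 1) (Nat.one_le_iff_ne_zero.mpr (Nat.succ_ne_zero n))
          simpa using this
        calc ‖f (n + 1)‖
            = ‖x‖ ^ (n + 2) * ((2 : ℕ) : ℝ) ^ (padicValNat 2 (n + 2)) := keyE (n + 1)
          _ ≤ (‖x‖ * ((1 : ℝ) / 4) ^ (n + 1)) * (2 : ℝ) ^ (n + 1) :=
              mul_le_mul hxpow hpow (by positivity) (by positivity)
          _ = ‖x‖ * ((1 : ℝ) / 2) ^ (n + 1) := by rw [mul_assoc, hcancel]
          _ ≤ ‖x‖ / 2 := by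
              rw [div_eq_mul_inv]
              apply mul_le_mul_of_nonneg_left _ hxnn
              simpa using hhalf
  obtain ⟨hxhalf, hbound⟩ := hmain
  -- summability
  have hbig : ∀ m : ℕ, ‖f m‖ ≤ ((m : ℝ) + 1) * (1 / 2) ^ (m + 1) := by
    intro m
    calc ‖f m‖ = ‖x‖ ^ (m + 1) * (p : ℝ) ^ (padicValNat p (m + 1)) := keyE m
      _ ≤ ((1 : ℝ) / 2) ^ (m + 1) * ((m : ℝ) + 1) := by
          apply mul_le_mul (pow_le_pow_left₀ hxnn hxhalf _) (hdvd m) (by positivity)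
            (by positivity)
      _ = ((m : ℝ) + 1) * (1 / 2) ^ (m + 1) := by ring
  have hlim : Tendsto (fun m : ℕ => ((m : ℝ) + 1) * (1 / 2) ^ (m + 1)) atTop (𝓝 0) := by
    have h0 : Tendsto (fun n : ℕ => (n : ℝ) * (1 / 2) ^ n) atTop (𝓝 0) := by
      have hs : Summable (fun n : ℕ => (n : ℝ) ^ 1 * (1 / 2) ^ n) :=
        summable_pow_mul_geometric_of_norm_lt_one 1 (by norm_num)
      simpa using hs.tendsto_atTop_zero
    refine (h0.comp (tendsto_add_atTop_nat 1)).congr fun m => ?_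
    simp only [Function.comp_apply]
    push_cast
    ring
  have hnorm0 : Tendsto (fun m : ℕ => ‖f m‖) atTop (𝓝 0) :=
    squeeze_zero (fun m => norm_nonneg _) hbig hlim
  have hf0 : Tendsto f atTop (𝓝 0) := tendsto_zero_iff_norm_tendsto_zero.mpr hnorm0
  have hsumm : Summable f := by
    apply NonarchimedeanAddGroup.summable_of_tendsto_cofinite_zero
    rwa [Nat.cofinite_eq_atTop]
  refine ⟨hsumm, ?_⟩
  rcases eq_or_ne x 0 with rfl | hx0
  · have hfz : f = fun _ => (0 : E) := by
      funext n
      simp [hf, zero_pow (Nat.succ_ne_zero n)]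
    rw [show (∑' n : ℕ, (-1 : E) ^ n * (0:E) ^ (n + 1) / ((n : E) + 1)) = ∑' n, f n from rfl,
      hfz]
    simp
  · have hxpos : 0 < ‖x‖ := norm_pos_iff.mpr hx0
    have hshift : Summable (fun n : ℕ => f (n + 1)) := (summable_nat_add_iff 1).mpr hsumm
    have hR : ‖∑' n : ℕ, f (n + 1)‖ ≤ ‖x‖ / 2 :=
      norm_tsum_le' hna (by positivity) hshift hbound
    have hlt : ‖∑' n : ℕ, f (n + 1)‖ < ‖x‖ := lt_of_le_of_lt hR (by linarith)
    have hf0eq : f 0 = x := by simp [hf]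
    calc ‖∑' n : ℕ, f n‖ = ‖f 0 + ∑' n : ℕ, f (n + 1)‖ := by rw [hsumm.tsum_eq_zero_add]
      _ = max ‖f 0‖ ‖∑' n : ℕ, f (n + 1)‖ := by
          apply IsUltrametricDist.norm_add_eq_max_of_norm_ne_norm
          rw [hf0eq]
          exact hlt.ne'
      _ = ‖x‖ := by rw [hf0eq]; exact max_eq_left hlt.le
end

section
/- Let p be a prime number and let E be a complete nonarchimedean normed field equipped with a structure of normed ℚ_p-algebra (so the norm of E is multiplicative and restricts to the standard p-adic norm on ℚ_p). If x ∈ E is nonzero and ‖x‖ < ‖p‖^{1/(p−1)}, then for every integer n ≥ 2 one has ‖xⁿ/n‖ < ‖x‖ (where n is regarded as an element of E via the natural map ℕ → E). -/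
/-- Let `p` be a prime number and let `E` be a complete nonarchimedean
normed field equipped with a structure of normed `ℚ_p`-algebra (so the norm of `E` is
multiplicative and restricts to the standard `p`-adic norm on `ℚ_p`).  If `x ∈ E` is
nonzero and `‖x‖ < ‖p‖^(1/(p−1))`, then for every integer `n ≥ 2` one has
`‖xⁿ/n‖ < ‖x‖` (where `n` is regarded as an element of `E` via the natural map
`ℕ → E`). -/
theorem padic_log_term_estimate (p : ℕ) [Fact p.Prime]
    (E : Type*) [NormedField E] [CompleteSpace E] [NormedAlgebra ℚ_[p] E]
    (hna : IsNonarchimedean (fun y : E => ‖y‖))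
    (x : E) (hx0 : x ≠ 0) (hx : ‖x‖ < ‖(p : E)‖ ^ ((1 : ℝ) / ((p : ℝ) - 1)))
    (n : ℕ) (hn : 2 ≤ n) :
    ‖x ^ n / (n : E)‖ < ‖x‖ := by
  have hp := (Fact.out : p.Prime)
  have hp1 : 1 < (p : ℝ) := by exact_mod_cast hp.one_lt
  have hp0 : (0 : ℝ) < p := by linarith
  -- norm of p in E
  have hpE : ‖(p : E)‖ = (p : ℝ)⁻¹ := by
    rw [← map_natCast (algebraMap ℚ_[p] E) p, norm_algebraMap']
    exact Padic.norm_p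
  -- norm of n in E
  set v : ℕ := padicValNat p n with hv
  have hnne : (n : ℚ_[p]) ≠ 0 := Nat.cast_ne_zero.mpr (by omega)
  have hnE : ‖(n : E)‖ = (p : ℝ) ^ (-(v : ℤ)) := by
    rw [← map_natCast (algebraMap ℚ_[p] E) n, norm_algebraMap',
      Padic.norm_eq_zpow_neg_valuation hnne, Padic.valuation_natCast]
  have hnEpos : (0 : ℝ) < ‖(n : E)‖ := by
    rw [hnE]; positivity
  have hr : (0 : ℝ) < ‖x‖ := norm_pos_iff.mpr hx0
  -- key: v * (p - 1) ≤ n - 1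
  have hdvd : p ^ v ≤ n := Nat.le_of_dvd (by omega) pow_padicValNat_dvd
  have hkey : (v : ℝ) * ((p : ℝ) - 1) ≤ (n : ℝ) - 1 := by
    have h1 : 1 + (v : ℝ) * ((p : ℝ) - 1) ≤ (1 + ((p : ℝ) - 1)) ^ v :=
      one_add_mul_le_pow (by linarith) v
    have h2 : ((p : ℝ)) ^ v ≤ (n : ℝ) := by exact_mod_cast hdvd
    have : (1 : ℝ) + ((p : ℝ) - 1) = p := by ring
    rw [this] at h1
    linarith
  -- rewrite goal
  rw [norm_div, norm_pow, div_lt_iff₀ hnEpos]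
  have hxpow : ‖x‖ ^ n = ‖x‖ ^ (n - 1) * ‖x‖ := by
    rw [← pow_succ]
    congr 1
    omega
  rw [hxpow, mul_comm ‖x‖ ‖(n : E)‖]
  apply mul_lt_mul_of_pos_right _ hr
  -- ‖x‖ ^ (n-1) < ‖n‖
  rw [hpE] at hx
  calc ‖x‖ ^ (n - 1)
      < ((p : ℝ)⁻¹ ^ ((1 : ℝ) / ((p : ℝ) - 1))) ^ (n - 1) := by
        apply pow_lt_pow_left₀ hx (norm_nonneg x) (by omega)
    _ = (p : ℝ) ^ (-((((n - 1 : ℕ)) : ℝ) / ((p : ℝ) - 1))) := by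
        rw [Real.inv_rpow hp0.le, ← Real.rpow_neg hp0.le,
          ← Real.rpow_natCast ((p:ℝ) ^ (-((1:ℝ)/((p:ℝ)-1)))) (n - 1),
          ← Real.rpow_mul hp0.le]
        congr 1
        ring
    _ ≤ (p : ℝ) ^ (-(v : ℝ)) := by
        apply Real.rpow_le_rpow_of_exponent_le hp1.le
        rw [neg_le_neg_iff, le_div_iff₀ (by linarith)]
        have : (((n - 1 : ℕ)) : ℝ) = (n : ℝ) - 1 := by
          push_cast [Nat.cast_sub (by omega : 1 ≤ n)]; ring
        rw [this]
        exact hkey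
    _ = ‖(n : E)‖ := by
        rw [hnE, ← Real.rpow_intCast]
        norm_num
end

section
/- Let 𝕜 be ℝ or ℂ and let V, W be normed vector spaces over 𝕜. Then the projective tensor seminorm π on V ⊗_𝕜 W is a cross norm on elementary tensors: for all v ∈ V and w ∈ W, π(v ⊗ w) = ‖v‖ · ‖w‖. -/
open scoped TensorProduct
open Finset

/-- The projective tensor seminorm on `V ⊗[𝕜] W`:
`π(z) = inf { Σᵢ ‖vᵢ‖·‖wᵢ‖ : z = Σᵢ vᵢ ⊗ wᵢ, the sums finite }`. -/
noncomputable def projTensorSeminorm (𝕜 : Type*) [NontriviallyNormedField 𝕜]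
    (V W : Type*) [NormedAddCommGroup V] [NormedSpace 𝕜 V]
    [NormedAddCommGroup W] [NormedSpace 𝕜 W] (z : TensorProduct 𝕜 V W) : ℝ :=
  sInf {r : ℝ | ∃ (n : ℕ) (v : Fin n → V) (w : Fin n → W),
    z = ∑ i, v i ⊗ₜ[𝕜] w i ∧ r = ∑ i, ‖v i‖ * ‖w i‖}

/-- Let `𝕜` be `ℝ` or `ℂ` and let `V, W` be normed vector spaces over
`𝕜`.  Then the projective tensor seminorm `π` on `V ⊗_𝕜 W` is a cross norm on
elementary tensors: for all `v ∈ V` and `w ∈ W`, `π(v ⊗ w) = ‖v‖ · ‖w‖`. -/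
theorem projTensorSeminorm_tmul_archimedean (𝕜 : Type*) [RCLike 𝕜]
    (V W : Type*) [NormedAddCommGroup V] [NormedSpace 𝕜 V]
    [NormedAddCommGroup W] [NormedSpace 𝕜 W] (v : V) (w : W) :
    projTensorSeminorm 𝕜 V W (v ⊗ₜ[𝕜] w) = ‖v‖ * ‖w‖ := by
  obtain ⟨f, hf1, hfv⟩ := exists_dual_vector'' 𝕜 v
  obtain ⟨g, hg1, hgw⟩ := exists_dual_vector'' 𝕜 w
  set L : TensorProduct 𝕜 V W →ₗ[𝕜] 𝕜 :=
    LinearMap.mul' 𝕜 𝕜 ∘ₗ TensorProduct.map f.toLinearMap g.toLinearMap with hL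
  have hlb : ∀ r ∈ {r : ℝ | ∃ (n : ℕ) (vs : Fin n → V) (ws : Fin n → W),
      v ⊗ₜ[𝕜] w = ∑ i, vs i ⊗ₜ[𝕜] ws i ∧ r = ∑ i, ‖vs i‖ * ‖ws i‖},
      ‖v‖ * ‖w‖ ≤ r := by
    rintro r ⟨n, vs, ws, hrep, rfl⟩
    have hLe : L (v ⊗ₜ[𝕜] w) = L (∑ i, vs i ⊗ₜ[𝕜] ws i) := by rw [hrep]
    have hLtmul : ∀ (a : V) (b : W), L (a ⊗ₜ[𝕜] b) = f a * g b := by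
      intro a b; simp [hL]
    rw [map_sum] at hLe
    have key : ‖v‖ * ‖w‖ = ‖L (v ⊗ₜ[𝕜] w)‖ := by
      rw [hLtmul, hfv, hgw]
      simp [norm_mul]
    rw [key, hLe]
    calc ‖∑ i, L (vs i ⊗ₜ[𝕜] ws i)‖ ≤ ∑ i, ‖L (vs i ⊗ₜ[𝕜] ws i)‖ :=
          norm_sum_le _ _
      _ ≤ ∑ i, ‖vs i‖ * ‖ws i‖ := by
          refine Finset.sum_le_sum fun i _ => ?_
          rw [hLtmul, norm_mul]
          have h1 : ‖f (vs i)‖ ≤ ‖vs i‖ := by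
            calc ‖f (vs i)‖ ≤ ‖f‖ * ‖vs i‖ := f.le_opNorm _
              _ ≤ 1 * ‖vs i‖ := by gcongr
              _ = ‖vs i‖ := one_mul _
          have h2 : ‖g (ws i)‖ ≤ ‖ws i‖ := by
            calc ‖g (ws i)‖ ≤ ‖g‖ * ‖ws i‖ := g.le_opNorm _
              _ ≤ 1 * ‖ws i‖ := by gcongr
              _ = ‖ws i‖ := one_mul _
          exact mul_le_mul h1 h2 (norm_nonneg _) (norm_nonneg _)
  have hmem : (‖v‖ * ‖w‖) ∈ {r : ℝ | ∃ (n : ℕ) (vs : Fin n → V) (ws : Fin n → W),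
      v ⊗ₜ[𝕜] w = ∑ i, vs i ⊗ₜ[𝕜] ws i ∧ r = ∑ i, ‖vs i‖ * ‖ws i‖} :=
    ⟨1, fun _ => v, fun _ => w, by simp, by simp⟩
  exact le_antisymm (csInf_le ⟨_, hlb⟩ hmem) (le_csInf ⟨_, hmem⟩ hlb)
end
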